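/- Let X be a subshift over a finite alphabet Λ. Then the following are equivalent: (i) for every β ∈ L_X and every ξ ∈ Ω_X, the orbit of ξ meets Ω_β, i.e. Orb(ξ) ∩ {η ∈ Ω_X : β ∈ η} ≠ ∅; (ii) X is strongly cofinal. -/

import Mathlib

open scoped Classical

namespace SubshiftPaper

variable {Λ : Type}

/-- The left shift on infinite words. -/
def shiftMap (x : ℕ → Λ) : ℕ → Λ := fun n => x (n + 1)

/-- Concatenation of a finite word with an infinite word. -/
def cat (α : List Λ) (y : ℕ → Λ) : ℕ → Λ := fun n => α.getD n (y (n - α.length))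

/-- `α` is a prefix of the infinite word `x`. -/
def Pref (α : List Λ) (x : ℕ → Λ) : Prop := ∀ (i : ℕ) (h : i < α.length), x i = α[i]

/-- The tail of `x` after `n` letters. -/
def tail (x : ℕ → Λ) (n : ℕ) : ℕ → Λ := fun i => x (n + i)

/-- `α` occurs in `x` at position `n`. -/
def OccursAt (α : List Λ) (x : ℕ → Λ) (n : ℕ) : Prop :=
  ∀ (i : ℕ) (h : i < α.length), x (n + i) = α[i]

/-- `α` occurs in `x` (as a contiguous block of letters). -/
def Occurs (α : List Λ) (x : ℕ → Λ) : Prop := ∃ n, OccursAt α x n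

/-- `X` is a subshift: a nonempty closed shift-invariant subset. -/
def IsSubshift [TopologicalSpace Λ] (X : Set (ℕ → Λ)) : Prop :=
  X.Nonempty ∧ IsClosed X ∧ ∀ x ∈ X, shiftMap x ∈ X

/-- The set of infinite words avoiding all words in `F`. -/
def ForbidSpace (F : Set (List Λ)) : Set (ℕ → Λ) := {x | ∀ α ∈ F, ¬ Occurs α x}

/-- `X` is a subshift of finite type. -/
def IsSFT (X : Set (ℕ → Λ)) : Prop := ∃ F : Set (List Λ), F.Finite ∧ X = ForbidSpace F

/-- The follower set of a finite word. -/
def follower (X : Set (ℕ → Λ)) (α : List Λ) : Set (ℕ → Λ) := {y | y ∈ X ∧ cat α y ∈ X}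

/-- The cylinder of a finite word. -/
def cylinder (X : Set (ℕ → Λ)) (α : List Λ) : Set (ℕ → Λ) := {x | x ∈ X ∧ Pref α x}

/-- The language of `X`. -/
def Language (X : Set (ℕ → Λ)) : Set (List Λ) := {α | ∃ x ∈ X, Occurs α x}

/-- The embedding of finite words into the free group. -/
def wd (α : List Λ) : FreeGroup Λ := (α.map FreeGroup.of).prod

/-- Indicator function of a set of group elements. -/
noncomputable def chi (s : Set (FreeGroup Λ)) : FreeGroup Λ → Bool :=
  fun g => if g ∈ s then true else false

/-- The set `ξ_x ⊆ 𝔽`. -/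
def xiSet [DecidableEq Λ] (X : Set (ℕ → Λ)) (x : ℕ → Λ) : Set (FreeGroup Λ) :=
  {g | ∃ α β : List Λ, g = wd α * (wd β)⁻¹ ∧
        FreeGroup.norm g = α.length + β.length ∧
        Pref α x ∧ tail x α.length ∈ follower X α ∩ follower X β}

/-- `ξ_x` as an element of `2^𝔽`. -/
noncomputable def xiB [DecidableEq Λ] (X : Set (ℕ → Λ)) (x : ℕ → Λ) : FreeGroup Λ → Bool :=
  chi (xiSet X x)

/-- The spectrum `Ω_X`: the closure of `{ξ_x : x ∈ X}` in `2^𝔽`. -/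
noncomputable def Omega [DecidableEq Λ] (X : Set (ℕ → Λ)) : Set (FreeGroup Λ → Bool) :=
  closure ((fun x => xiB X x) '' X)

/-- Left translation of an element of `2^𝔽`. -/
def translate (g : FreeGroup Λ) (ξ : FreeGroup Λ → Bool) : FreeGroup Λ → Bool :=
  fun h => ξ (g⁻¹ * h)

/-- `x` is the stem of `ξ`: `ξ ∩ 𝔽₊` is exactly the set of prefixes of `x`. -/
def IsStem (ξ : FreeGroup Λ → Bool) (x : ℕ → Λ) : Prop :=
  {g | ξ g = true} ∩ {g | ∃ α : List Λ, g = wd α} =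
    {g | ∃ α : List Λ, g = wd α ∧ Pref α x}

/-- `x` is the stem of `ξ` at `g`: `ξ ∩ g𝔽₊ = {gα : α is a prefix of x}`. -/
def IsStemAt (ξ : FreeGroup Λ → Bool) (g : FreeGroup Λ) (x : ℕ → Λ) : Prop :=
  {h | ξ h = true} ∩ {h | ∃ α : List Λ, h = g * wd α} =
    {h | ∃ α : List Λ, h = g * wd α ∧ Pref α x}

/-- The orbit of `ξ` under the spectral partial action. -/
def Orbit (ξ : FreeGroup Λ → Bool) : Set (FreeGroup Λ → Bool) :=
  {η | ∃ g : FreeGroup Λ, ξ g⁻¹ = true ∧ η = translate g ξ}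

/-- Topological freeness of the spectral partial action. -/
noncomputable def TopFree [DecidableEq Λ] (X : Set (ℕ → Λ)) : Prop :=
  ∀ g : FreeGroup Λ, g ≠ 1 →
    ∀ U : Set (FreeGroup Λ → Bool), IsOpen U →
      (U ∩ Omega X ⊆ {ξ | ξ g⁻¹ = true ∧ translate g ξ = ξ}) → U ∩ Omega X = ∅

/-- The periodic infinite word `γ^∞`. -/
noncomputable def perInf [Nonempty Λ] (γ : List Λ) : ℕ → Λ :=
  fun n => γ.getD (n % γ.length) (Classical.arbitrary Λ)

/-- `n`-fold concatenation of a finite word with itself. -/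
def rep : ℕ → List Λ → List Λ
  | 0, _ => []
  | n + 1, γ => γ ++ rep n γ

/-- `γ` is a circuit relative to `X`. -/
noncomputable def IsCircuit [Nonempty Λ] (X : Set (ℕ → Λ)) (γ : List Λ) : Prop :=
  γ ≠ [] ∧ perInf γ ∈ X

/-- `y` is an exit for the circuit `γ`. -/
noncomputable def IsExit [Nonempty Λ] (X : Set (ℕ → Λ)) (γ : List Λ) (y : ℕ → Λ) : Prop :=
  y ≠ perInf γ ∧ cat γ y ∈ X

/-- `z` is a strong exit for the circuit `γ`. -/
noncomputable def IsStrongExit [Nonempty Λ] (X : Set (ℕ → Λ)) (γ : List Λ) (z : ℕ → Λ) : Prop :=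
  z ≠ perInf γ ∧ ∀ n : ℕ, cat (rep n γ) z ∈ X

/-- The sets `X_g` of the standard partial action. -/
def Xg [DecidableEq Λ] (X : Set (ℕ → Λ)) (g : FreeGroup Λ) : Set (ℕ → Λ) :=
  {x | ∃ α β : List Λ, g = wd α * (wd β)⁻¹ ∧
        FreeGroup.norm g = α.length + β.length ∧
        ∃ y ∈ follower X α ∩ follower X β, x = cat α y}

/-- `x` is a fixed point for `θ_g`. -/
def IsThetaFixed [DecidableEq Λ] (X : Set (ℕ → Λ)) (g : FreeGroup Λ) (x : ℕ → Λ) : Prop :=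
  ∃ α β : List Λ, g = wd α * (wd β)⁻¹ ∧
    FreeGroup.norm g = α.length + β.length ∧
    ∃ y ∈ follower X α ∩ follower X β, x = cat β y ∧ cat α y = x

/-- `x` may be collectively reached from the finite set `B`. -/
def CollReached (X : Set (ℕ → Λ)) (B : Finset (List Λ)) (x : ℕ → Λ) : Prop :=
  ∃ α γ : List Λ, Pref α x ∧ ∀ β ∈ B, cat (β ++ γ) (tail x α.length) ∈ X

/-- `X` is collectively cofinal. -/
def CollCofinal (X : Set (ℕ → Λ)) : Prop :=
  ∀ B : Finset (List Λ), ↑B ⊆ Language X → (⋂ β ∈ B, follower X β).Nonempty →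
    ∀ x ∈ X, CollReached X B x

/-- `X` is strongly cofinal. -/
def StrongCofinal (X : Set (ℕ → Λ)) : Prop :=
  ∀ β ∈ Language X, ∃ M : ℕ, ∀ x ∈ X, ∃ α γ : List Λ, Pref α x ∧
    cat (β ++ γ) (tail x α.length) ∈ X ∧ α.length + γ.length ≤ M

/-- The even shift. -/
def evenShift : Set (ℕ → Fin 2) :=
  ForbidSpace {w | ∃ n : ℕ, w = 0 :: (List.replicate (2 * n + 1) 1 ++ [0])}


section Aux

/- ## basic word/stream lemmas -/

lemma tail_zero (x : ℕ → Λ) : tail x 0 = x := funext fun i => by simp [tail]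

lemma tail_tail (x : ℕ → Λ) (n m : ℕ) : tail (tail x n) m = tail x (n + m) :=
  funext fun i => by simp [tail, Nat.add_assoc]

lemma cat_lt {α : List Λ} {y : ℕ → Λ} {n : ℕ} (h : n < α.length) : cat α y n = α[n] := by
  simp only [cat]; rw [List.getD_eq_getElem _ _ h]

lemma cat_ge {α : List Λ} {y : ℕ → Λ} {n : ℕ} (h : α.length ≤ n) :
    cat α y n = y (n - α.length) := by
  simp only [cat]; rw [List.getD_eq_default _ _ h]

lemma pref_cat (α : List Λ) (y : ℕ → Λ) : Pref α (cat α y) := fun i h => cat_lt h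

lemma tail_cat (α : List Λ) (y : ℕ → Λ) : tail (cat α y) α.length = y :=
  funext fun i => by
    rw [tail, cat_ge (Nat.le_add_right _ _), Nat.add_sub_cancel_left]

lemma cat_eq_of_pref {α : List Λ} {x : ℕ → Λ} (h : Pref α x) :
    cat α (tail x α.length) = x := by
  funext n
  rcases lt_or_ge n α.length with hn | hn
  · rw [cat_lt hn, h n hn]
  · rw [cat_ge hn, tail, Nat.add_sub_cancel' hn]

lemma cat_cat (α ρ : List Λ) (y : ℕ → Λ) : cat (α ++ ρ) y = cat α (cat ρ y) := by
  funext n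
  rcases lt_or_ge n α.length with h1 | h1
  · rw [cat_lt (show n < (α ++ ρ).length by simp; omega), cat_lt h1,
      List.getElem_append_left h1]
  · rcases lt_or_ge n (α.length + ρ.length) with h2 | h2
    · rw [cat_lt (show n < (α ++ ρ).length by simpa using h2), cat_ge h1,
        cat_lt (show n - α.length < ρ.length by omega), List.getElem_append_right h1]
    · rw [cat_ge (show (α ++ ρ).length ≤ n by simpa using h2), cat_ge h1,
        cat_ge (show ρ.length ≤ n - α.length by omega), List.length_append]
      congr 1; omega

lemma pref_append {α ρ : List Λ} {x : ℕ → Λ} :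
    Pref (α ++ ρ) x ↔ Pref α x ∧ Pref ρ (tail x α.length) := by
  constructor
  · intro h
    refine ⟨fun i hi => ?_, fun i hi => ?_⟩
    · have := h i (by simp; omega)
      rwa [List.getElem_append_left hi] at this
    · have := h (α.length + i) (by simp; omega)
      rw [List.getElem_append_right (Nat.le_add_right _ _)] at this
      simpa [tail] using this
  · rintro ⟨h1, h2⟩ i hi
    rcases lt_or_ge i α.length with h3 | h3
    · rw [List.getElem_append_left h3]; exact h1 i h3
    · rw [List.getElem_append_right h3]
      have := h2 (i - α.length) (by simp at hi; omega)
      rw [tail] at this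
      rwa [Nat.add_sub_cancel' h3] at this

lemma pref_le {α μ : List Λ} {x : ℕ → Λ} (hα : Pref α x) (hμ : Pref μ x)
    (h : α.length ≤ μ.length) : ∃ ρ, μ = α ++ ρ := by
  refine ⟨μ.drop α.length, ?_⟩
  conv_lhs => rw [← List.take_append_drop α.length μ]
  congr 1
  apply List.ext_getElem
  · simp [Nat.min_eq_left h]
  · intro i h1 h2
    rw [List.getElem_take]
    rw [← hμ i (by omega), ← hα i h2]

/- ## subshift lemmas -/

lemma tail_mem [TopologicalSpace Λ] {X : Set (ℕ → Λ)} (hX : IsSubshift X) {x : ℕ → Λ}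
    (hx : x ∈ X) (n : ℕ) : tail x n ∈ X := by
  induction n with
  | zero => rwa [tail_zero]
  | succ n ih =>
    have : tail x (n + 1) = shiftMap (tail x n) := funext fun i => by
      simp [tail, shiftMap]; ring_nf
    rw [this]; exact hX.2.2 _ ih

lemma cat_tail_mem [TopologicalSpace Λ] {X : Set (ℕ → Λ)} (hX : IsSubshift X)
    {β γ : List Λ} {z : ℕ → Λ} (h : cat (β ++ γ) z ∈ X) : cat γ z ∈ X := by
  have := tail_mem hX h β.length
  rwa [cat_cat, tail_cat] at this

/- ## free group word lemmas -/

lemma wd_nil : wd ([] : List Λ) = 1 := by simp [wd]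

lemma wd_append (α β : List Λ) : wd (α ++ β) = wd α * wd β := by simp [wd]

lemma wd_eq_mk (α : List Λ) : wd α = FreeGroup.mk (α.map fun a => (a, true)) := by
  induction α with
  | nil => simp [wd, FreeGroup.one_eq_mk]
  | cons a α ih =>
    have : (a :: α) = [a] ++ α := rfl
    rw [this, wd_append, ih]
    have : wd [a] = FreeGroup.mk [(a, true)] := by
      simp [wd, FreeGroup.of]
    rw [this, FreeGroup.mul_mk]
    rfl

lemma chain'_of_const_snd {R : Λ × Bool → Λ × Bool → Prop} (l : List (Λ × Bool)) (b : Bool)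
    (hconst : ∀ p ∈ l, p.2 = b) (hR : ∀ p q : Λ × Bool, p.2 = q.2 → R p q) :
    l.Chain' R := by
  induction l with
  | nil => exact List.isChain_nil
  | cons p t ih =>
    cases t with
    | nil => exact List.isChain_singleton _
    | cons q t' =>
      refine List.isChain_cons_cons.mpr ⟨hR p q ?_, ih (fun r hr => hconst r (List.mem_cons_of_mem _ hr))⟩
      rw [hconst p (by simp), hconst q (by simp)]

variable [DecidableEq Λ]

lemma reduce_eq_self {W : List (Λ × Bool)} (h : W.Chain' fun p q => ¬(p.1 = q.1 ∧ p.2 = !q.2)) :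
    FreeGroup.reduce W = W := by
  induction W with
  | nil => rfl
  | cons p t ih =>
    rw [FreeGroup.reduce.cons, ih h.tail]
    cases t with
    | nil => rfl
    | cons q t' =>
      have hpq : ¬(p.1 = q.1 ∧ p.2 = !q.2) := List.isChain_cons_cons.mp h |>.1
      simp only [if_neg hpq]

lemma norm_wd_mul_inv {α β : List Λ}
    (hc : α = [] ∨ β = [] ∨ α.getLast? ≠ β.getLast?) :
    FreeGroup.norm (wd α * (wd β)⁻¹) = α.length + β.length := by
  rw [wd_eq_mk, wd_eq_mk, FreeGroup.inv_mk, FreeGroup.mul_mk]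
  have hinv : FreeGroup.invRev (β.map fun a => (a, true)) = β.reverse.map fun a => (a, false) := by
    simp [FreeGroup.invRev, List.map_map, Function.comp_def, List.map_reverse]
  rw [hinv]
  have hchain : ((α.map fun a => (a, true)) ++ β.reverse.map fun a => (a, false)).Chain'
      fun p q => ¬(p.1 = q.1 ∧ p.2 = !q.2) := by
    show List.IsChain _ _
    rw [List.isChain_append]
    refine ⟨chain'_of_const_snd _ true (by simp) ?_, chain'_of_const_snd _ false (by simp) ?_, ?_⟩
    · rintro p q hpq ⟨-, h2⟩; rw [hpq] at h2; simp at h2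
    · rintro p q hpq ⟨-, h2⟩; rw [hpq] at h2; simp at h2
    · intro p hp q hq
      rw [List.getLast?_map] at hp
      rw [List.head?_map, List.head?_reverse] at hq
      rcases hc with hc | hc | hc
      · simp [hc] at hp
      · simp [hc] at hq
      · rintro ⟨h1, -⟩
        apply hc
        rw [Option.mem_def, Option.map_eq_some_iff] at hp hq
        obtain ⟨a, ha, rfl⟩ := hp
        obtain ⟨b, hb, rfl⟩ := hq
        simp only at h1
        rw [ha, hb, h1]
  rw [FreeGroup.norm, FreeGroup.toWord_mk, reduce_eq_self hchain]
  simp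

lemma wd_injective : Function.Injective (wd : List Λ → FreeGroup Λ) := by
  intro α β h
  rw [wd_eq_mk, wd_eq_mk] at h
  have h2 := congrArg FreeGroup.toWord h
  rw [FreeGroup.toWord_mk, FreeGroup.toWord_mk,
    reduce_eq_self (chain'_of_const_snd _ true (by simp)
      (by rintro p q hpq ⟨-, h2⟩; rw [hpq] at h2; simp at h2)),
    reduce_eq_self (chain'_of_const_snd _ true (by simp)
      (by rintro p q hpq ⟨-, h2⟩; rw [hpq] at h2; simp at h2))] at h2
  exact List.map_injective_iff.mpr (fun a b hab => by simpa using hab) h2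

lemma strip_rev (ra : List Λ) : ∀ rb : List Λ, ∃ ra₀ rb₀ rs : List Λ,
    ra = rs ++ ra₀ ∧ rb = rs ++ rb₀ ∧ (ra₀ = [] ∨ rb₀ = [] ∨ ra₀.head? ≠ rb₀.head?) := by
  induction ra with
  | nil => intro rb; exact ⟨[], rb, [], rfl, rfl, Or.inl rfl⟩
  | cons a ra' ih =>
    intro rb
    cases rb with
    | nil => exact ⟨a :: ra', [], [], rfl, rfl, Or.inr (Or.inl rfl)⟩
    | cons b rb' =>
      by_cases hab : a = b
      · obtain ⟨ra₀, rb₀, rs, h1, h2, h3⟩ := ih rb'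
        exact ⟨ra₀, rb₀, a :: rs, by simp [h1], by simp [hab, h2], h3⟩
      · exact ⟨a :: ra', b :: rb', [], rfl, rfl, Or.inr (Or.inr (by simp [hab]))⟩

lemma exists_strip (α β : List Λ) : ∃ α₀ β₀ s : List Λ,
    α = α₀ ++ s ∧ β = β₀ ++ s ∧ (α₀ = [] ∨ β₀ = [] ∨ α₀.getLast? ≠ β₀.getLast?) := by
  obtain ⟨ra₀, rb₀, rs, h1, h2, h3⟩ := strip_rev α.reverse β.reverse
  refine ⟨ra₀.reverse, rb₀.reverse, rs.reverse, ?_, ?_, ?_⟩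
  · rw [← List.reverse_reverse α, h1, List.reverse_append]
  · rw [← List.reverse_reverse β, h2, List.reverse_append]
  · rcases h3 with h | h | h
    · exact Or.inl (by simp [h])
    · exact Or.inr (Or.inl (by simp [h]))
    · exact Or.inr (Or.inr (by simpa [List.getLast?_reverse] using h))




lemma chi_eq_true {s : Set (FreeGroup Λ)} {g : FreeGroup Λ} : chi s g = true ↔ g ∈ s := by
  by_cases h : g ∈ s <;> simp [chi, h]

lemma xiB_eq_true {X : Set (ℕ → Λ)} {x : ℕ → Λ} {g : FreeGroup Λ} :
    xiB X x g = true ↔ g ∈ xiSet X x := chi_eq_true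

variable [TopologicalSpace Λ]

lemma mem_xiSet_iff {X : Set (ℕ → Λ)} (hX : IsSubshift X) {x : ℕ → Λ} (hx : x ∈ X)
    {g : FreeGroup Λ} :
    g ∈ xiSet X x ↔ ∃ α β : List Λ, g = wd α * (wd β)⁻¹ ∧ Pref α x ∧
      cat β (tail x α.length) ∈ X := by
  constructor
  · rintro ⟨α, β, hg, -, hp, hf⟩
    exact ⟨α, β, hg, hp, hf.2.2⟩
  · rintro ⟨α, β, hg, hp, hf⟩
    obtain ⟨α₀, β₀, s, rfl, rfl, hc⟩ := exists_strip α β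
    have hgeq : g = wd α₀ * (wd β₀)⁻¹ := by
      rw [hg, wd_append, wd_append]; group
    have hpα₀ : Pref α₀ x := (pref_append.mp hp).1
    have hps : Pref s (tail x α₀.length) := (pref_append.mp hp).2
    refine ⟨α₀, β₀, hgeq, by rw [hgeq]; exact norm_wd_mul_inv hc, hpα₀, ?_, ?_⟩
    · exact ⟨tail_mem hX hx _, by rw [cat_eq_of_pref hpα₀]; exact hx⟩
    · refine ⟨tail_mem hX hx _, ?_⟩
      have : cat s (tail x (α₀.length + s.length)) = tail x α₀.length := by
        rw [← tail_tail]; exact cat_eq_of_pref hps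
      rw [← this, ← cat_cat]
      rwa [List.length_append] at hf

lemma key_step {X : Set (ℕ → Λ)} (hX : IsSubshift X) {α δ : List Λ} {y : ℕ → Λ}
    (hα : cat α y ∈ X) (hδ : cat δ y ∈ X) (h : FreeGroup Λ)
    (hh : h ∈ xiSet X (cat δ y)) : wd α * (wd δ)⁻¹ * h ∈ xiSet X (cat α y) := by
  rw [mem_xiSet_iff hX hδ] at hh
  obtain ⟨μ, ν, rfl, hpμ, hν⟩ := hh
  rcases le_or_gt μ.length δ.length with hle | hlt
  · obtain ⟨τ, rfl⟩ := pref_le hpμ (pref_cat δ y) hle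
    rw [mem_xiSet_iff hX hα]
    refine ⟨α, ν ++ τ, ?_, pref_cat α y, ?_⟩
    · rw [wd_append, wd_append]; group
    · rw [tail_cat, cat_cat]
      rwa [cat_cat, tail_cat] at hν
  · obtain ⟨ρ, rfl⟩ := pref_le (pref_cat δ y) hpμ hlt.le
    have hρ : Pref ρ y := by
      have := (pref_append.mp hpμ).2
      rwa [tail_cat] at this
    rw [mem_xiSet_iff hX hα]
    refine ⟨α ++ ρ, ν, ?_, ?_, ?_⟩
    · rw [wd_append, wd_append]; group
    · exact pref_append.mpr ⟨pref_cat α y, by rw [tail_cat]; exact hρ⟩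
    · rw [List.length_append, ← tail_tail, tail_cat]
      rwa [List.length_append, ← tail_tail, tail_cat] at hν

lemma translate_xiB {X : Set (ℕ → Λ)} (hX : IsSubshift X) {α δ : List Λ} {y : ℕ → Λ}
    (hα : cat α y ∈ X) (hδ : cat δ y ∈ X) :
    translate (wd δ * (wd α)⁻¹) (xiB X (cat α y)) = xiB X (cat δ y) := by
  funext h
  have hiff : (wd δ * (wd α)⁻¹)⁻¹ * h ∈ xiSet X (cat α y) ↔ h ∈ xiSet X (cat δ y) := by
    constructor
    · intro hm
      have := key_step hX hδ hα _ hm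
      have heq : wd δ * (wd α)⁻¹ * ((wd δ * (wd α)⁻¹)⁻¹ * h) = h := by group
      rwa [heq] at this
    · intro hm
      have := key_step hX hα hδ _ hm
      have heq : (wd δ * (wd α)⁻¹)⁻¹ * h = wd α * (wd δ)⁻¹ * h := by group
      rwa [← heq] at this
  show xiB X (cat α y) ((wd δ * (wd α)⁻¹)⁻¹ * h) = xiB X (cat δ y) h
  rw [← xiB_eq_true, ← xiB_eq_true] at hiff
  exact Bool.coe_iff_coe.mp hiff

lemma continuous_translate (g : FreeGroup Λ) :
    Continuous (translate g : (FreeGroup Λ → Bool) → (FreeGroup Λ → Bool)) :=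
  continuous_pi fun h => continuous_apply (g⁻¹ * h)


lemma isOpen_eval (g : FreeGroup Λ) : IsOpen {η : FreeGroup Λ → Bool | η g = true} := by
  have h : {η : FreeGroup Λ → Bool | η g = true} =
      (fun η : FreeGroup Λ → Bool => η g) ⁻¹' {true} := rfl
  rw [h]
  exact IsOpen.preimage (continuous_apply g) (isOpen_discrete _)

lemma isClosed_eval (g : FreeGroup Λ) : IsClosed {η : FreeGroup Λ → Bool | η g = true} := by
  have h : {η : FreeGroup Λ → Bool | η g = true} =
      (fun η : FreeGroup Λ → Bool => η g) ⁻¹' {true} := rfl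
  rw [h]
  exact IsClosed.preimage (continuous_apply g) (isClosed_discrete _)

end Aux

/-- every orbit meets every `Ω_β` (for `β` in the language) iff `X` is
strongly cofinal. -/
theorem orbit_meets_iff_strongCofinal {Λ : Type} [Fintype Λ] [Nonempty Λ] [DecidableEq Λ]
    [TopologicalSpace Λ] [DiscreteTopology Λ]
    (X : Set (ℕ → Λ)) (hX : IsSubshift X) :
    (∀ β ∈ Language X, ∀ ξ ∈ Omega X, ∃ g : FreeGroup Λ,
        ξ g⁻¹ = true ∧ translate g ξ ∈ Omega X ∧ translate g ξ (wd β) = true) ↔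
      StrongCofinal X := by
  constructor
  · -- orbit condition → strongly cofinal
    intro H β hβ
    have hcomp : IsCompact (Omega X) := IsClosed.isCompact isClosed_closure
    have hUopen : ∀ g : FreeGroup Λ,
        IsOpen {η : FreeGroup Λ → Bool | η g⁻¹ = true ∧ η (g⁻¹ * wd β) = true} := by
      intro g
      exact IsOpen.and (isOpen_eval g⁻¹) (isOpen_eval (g⁻¹ * wd β))
    have hcover : Omega X ⊆ ⋃ g : FreeGroup Λ,
        {η : FreeGroup Λ → Bool | η g⁻¹ = true ∧ η (g⁻¹ * wd β) = true} := by
      intro ξ hξ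
      obtain ⟨g, h1, _, h3⟩ := H β hβ ξ hξ
      exact Set.mem_iUnion.mpr ⟨g, h1, h3⟩
    obtain ⟨t, ht⟩ := hcomp.elim_finite_subcover _ hUopen hcover
    refine ⟨t.sup fun g => max (FreeGroup.norm g⁻¹) (FreeGroup.norm (g⁻¹ * wd β)), ?_⟩
    intro x hx
    have hxmem : xiB X x ∈ Omega X := subset_closure ⟨x, hx, rfl⟩
    obtain ⟨g, hgt, hg1, hg2⟩ := Set.mem_iUnion₂.mp (ht hxmem)
    rw [xiB_eq_true] at hg1 hg2
    obtain ⟨α, δ, heq, hnorm, hpα, hfol⟩ := hg1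
    obtain ⟨μ, ν, heq2, hnorm2, hpμ, hfol2⟩ := hg2
    have hδX : cat δ (tail x α.length) ∈ X := hfol.2.2
    have hsup : max (FreeGroup.norm g⁻¹) (FreeGroup.norm (g⁻¹ * wd β)) ≤
        t.sup fun g => max (FreeGroup.norm g⁻¹) (FreeGroup.norm (g⁻¹ * wd β)) :=
      Finset.le_sup (f := fun g => max (FreeGroup.norm g⁻¹) (FreeGroup.norm (g⁻¹ * wd β))) hgt
    rcases le_or_gt α.length μ.length with hle | hlt
    · obtain ⟨ρ, rfl⟩ := pref_le hpα hpμ hle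
      have E : wd α * (wd δ)⁻¹ * wd β = wd (α ++ ρ) * (wd ν)⁻¹ := by
        rw [← heq]; exact heq2
      have hb : wd (δ ++ ρ) = wd (β ++ ν) := by
        rw [wd_append, wd_append]
        calc wd δ * wd ρ
            = wd δ * (wd α)⁻¹ * (wd (α ++ ρ) * (wd ν)⁻¹) * wd ν := by rw [wd_append]; group
          _ = wd δ * (wd α)⁻¹ * (wd α * (wd δ)⁻¹ * wd β) * wd ν := by rw [E]
          _ = wd β * wd ν := by group
      have hlist : δ ++ ρ = β ++ ν := wd_injective hb
      refine ⟨α ++ ρ, ν, hpμ, ?_, ?_⟩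
      · rw [← hlist, cat_cat, List.length_append, ← tail_tail,
          cat_eq_of_pref (pref_append.mp hpμ).2]
        exact hδX
      · calc (α ++ ρ).length + ν.length = FreeGroup.norm (g⁻¹ * wd β) := hnorm2.symm
          _ ≤ _ := le_trans (le_max_right _ _) hsup
    · obtain ⟨ρ, rfl⟩ := pref_le hpμ hpα hlt.le
      have E2 : wd (μ ++ ρ) * (wd δ)⁻¹ * wd β = wd μ * (wd ν)⁻¹ := by
        rw [← heq]; exact heq2
      have hδ2 : wd δ = wd β * wd ν * wd ρ := by
        calc wd δ = wd β * ((wd (μ ++ ρ) * (wd δ)⁻¹ * wd β)⁻¹ * wd (μ ++ ρ)) := by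
              rw [wd_append]; group
          _ = wd β * ((wd μ * (wd ν)⁻¹)⁻¹ * wd (μ ++ ρ)) := by rw [E2]
          _ = wd β * wd ν * wd ρ := by rw [wd_append]; group
      have hlist : δ = β ++ (ν ++ ρ) := by
        apply wd_injective
        rw [hδ2, wd_append, wd_append]; group
      refine ⟨μ ++ ρ, ν ++ ρ, hpα, ?_, ?_⟩
      · rw [← hlist]; exact hδX
      · have h1 : (μ ++ ρ).length + (ν ++ ρ).length ≤ FreeGroup.norm g⁻¹ := by
          rw [hnorm, hlist]
          simp only [List.length_append]
          omega
        exact le_trans h1 (le_trans (le_max_left _ _) hsup)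
  · -- strongly cofinal → orbit condition
    intro hSC β hβ ξ hξ
    obtain ⟨M, hM⟩ := hSC β hβ
    set P : Set (List Λ × List Λ) := {p | p.1.length + p.2.length ≤ M} with hP
    have hPfin : P.Finite := by
      apply Set.Finite.subset ((List.finite_length_le Λ M).prod (List.finite_length_le Λ M))
      rintro ⟨a, b⟩ h
      have : a.length + b.length ≤ M := h
      exact ⟨by simp; omega, by simp; omega⟩
    set S : List Λ × List Λ → Set (FreeGroup Λ → Bool) := fun p =>
      (fun x => xiB X x) '' {x | x ∈ X ∧ Pref p.1 x ∧ cat (β ++ p.2) (tail x p.1.length) ∈ X}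
      with hS
    have hcov : (fun x => xiB X x) '' X ⊆ ⋃ p ∈ P, S p := by
      rintro _ ⟨x, hx, rfl⟩
      obtain ⟨α, γ, h1, h2, h3⟩ := hM x hx
      exact Set.mem_biUnion (show (α, γ) ∈ P from h3) ⟨x, ⟨hx, h1, h2⟩, rfl⟩
    have hsub : Omega X ⊆ ⋃ p ∈ P, closure (S p) :=
      closure_minimal (hcov.trans (Set.iUnion₂_mono fun p _ => subset_closure))
        (hPfin.isClosed_biUnion fun p _ => isClosed_closure)
    obtain ⟨p, _, hξp⟩ := Set.mem_iUnion₂.mp (hsub hξ)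
    refine ⟨wd (β ++ p.2) * (wd p.1)⁻¹, ?_, ?_, ?_⟩
    · have hcl : IsClosed {η : FreeGroup Λ → Bool |
          η ((wd (β ++ p.2) * (wd p.1)⁻¹)⁻¹) = true} := isClosed_eval _
      have hsubS : S p ⊆ {η | η ((wd (β ++ p.2) * (wd p.1)⁻¹)⁻¹) = true} := by
        rintro _ ⟨x, ⟨hx, hpref, hcat⟩, rfl⟩
        show xiB X x _ = true
        rw [xiB_eq_true, mem_xiSet_iff hX hx]
        exact ⟨p.1, β ++ p.2, by group, hpref, hcat⟩
      exact closure_minimal hsubS hcl hξp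
    · have himg : translate (wd (β ++ p.2) * (wd p.1)⁻¹) '' S p ⊆ (fun x => xiB X x) '' X := by
        rintro _ ⟨_, ⟨x, ⟨hx, hpref, hcat⟩, rfl⟩, rfl⟩
        have hx' : cat p.1 (tail x p.1.length) ∈ X := by
          rw [cat_eq_of_pref hpref]; exact hx
        have htr := translate_xiB hX hx' hcat
        rw [cat_eq_of_pref hpref] at htr
        show translate _ (xiB X x) ∈ _
        rw [htr]
        exact ⟨_, hcat, rfl⟩
      have h1 : translate (wd (β ++ p.2) * (wd p.1)⁻¹) ξ ∈
          closure (translate (wd (β ++ p.2) * (wd p.1)⁻¹) '' S p) :=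
        image_closure_subset_closure_image (continuous_translate _) ⟨ξ, hξp, rfl⟩
      exact closure_mono himg h1
    · show ξ ((wd (β ++ p.2) * (wd p.1)⁻¹)⁻¹ * wd β) = true
      have hgw : (wd (β ++ p.2) * (wd p.1)⁻¹)⁻¹ * wd β = wd p.1 * (wd p.2)⁻¹ := by
        rw [wd_append]; group
      rw [hgw]
      have hcl : IsClosed {η : FreeGroup Λ → Bool | η (wd p.1 * (wd p.2)⁻¹) = true} :=
        isClosed_eval _
      have hsubS : S p ⊆ {η | η (wd p.1 * (wd p.2)⁻¹) = true} := by
        rintro _ ⟨x, ⟨hx, hpref, hcat⟩, rfl⟩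
        show xiB X x _ = true
        rw [xiB_eq_true, mem_xiSet_iff hX hx]
        exact ⟨p.1, p.2, rfl, hpref, cat_tail_mem hX hcat⟩
      exact closure_minimal hsubS hcl hξp


end SubshiftPaper
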